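/- arXiv:1206.4258 — 3 statements merged into one kernel-verified Lean document; each statement's English description precedes it below -/
import Mathlib

section
/- Let r ∈ (0,1) be a rational number with continued fraction expansion r = [a_1, a_2, …, a_k], where each a_i is a positive integer and a_k ≥ 2, and let m = 2n ≥ 3 be an integer (n an integer or half-integer with n > 1). A rational number s belongs to the Γ_{r,n}-orbit of ∞ in ℚ ∪ {∞} if and only if there exist a positive integer t, an integer c, signs ε_1, …, ε_t ∈ {+1, −1}, and integers c_1, c_2, …, c_{2t−1} such that s = 2c + [ε_1·a, m·c_1, −ε_1·a^{−1}, 2c_2, ε_2·a, m·c_3, −ε_2·a^{−1}, 2c_4, …, 2c_{2t−2}, ε_t·a, m·c_{2t−1}, −ε_t·a^{−1}], where ε·a denotes the sequence (ε a_1, …, ε a_k), ε·a^{−1} denotes the reversed sequence (ε a_k, …, ε a_1), and the displayed sequence is the concatenation of the blocks (ε_i·a, m·c_{2i−1}, −ε_i·a^{−1}) for i = 1, …, t with the single entry 2c_{2i} inserted between the i-th and (i+1)-st blocks. -/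
/-!
Common setup: 2-bridge link groups, Heckoid groups, the words `u_s`,
Möbius transformations on `ℚ ∪ {∞}` (modelled as `Option ℚ`, with `none = ∞`),
the group `Γ_{r,n}`, continued fractions, and small–cancellation notions.
-/

/-- The free group `F` on the two generators `a`, `b`. -/
abbrev FG := FreeGroup (Fin 2)

namespace Heckoid

/-- The generator `a`. -/
def ga : FG := FreeGroup.of 0

/-- The generator `b`. -/
def gb : FG := FreeGroup.of 1

/-- `ε_i = (−1)^⌊ i q / p ⌋`, as an element `±1` of `ℤ`. -/
def epsSign (q : ℤ) (p : ℕ) (i : ℕ) : ℤ := (-1) ^ (Int.fdiv ((i : ℤ) * q) (p : ℤ)).natAbs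

/-- The letter at position `i`: `b` if `i` is odd, `a` if `i` is even. -/
def genAt (i : ℕ) : FG := if i % 2 = 1 then gb else ga

/-- `v = b^{ε₁} a^{ε₂} b^{ε₃} ⋯` (`p − 1` alternating letters). -/
def vWord (q : ℤ) (p : ℕ) : FG :=
  ((List.range (p - 1)).map fun i => genAt (i + 1) ^ epsSign q p (i + 1)).prod

/-- The word `u_s` associated with a rational number `s = q/p` in lowest terms:
`u_s = a v b^{(−1)^q} v⁻¹` if `p` is odd, and `u_s = a v a⁻¹ v⁻¹` if `p` is even. -/
def uWord (s : ℚ) : FG :=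
  if s.den % 2 = 1 then
    ga * vWord s.num s.den * gb ^ ((-1 : ℤ) ^ s.num.natAbs) * (vWord s.num s.den)⁻¹
  else
    ga * vWord s.num s.den * ga⁻¹ * (vWord s.num s.den)⁻¹

/-- The even Heckoid group `H(r;n) = ⟨a, b ∣ u_r^n⟩`. -/
abbrev HeckoidGroup (r : ℚ) (n : ℕ) := PresentedGroup ({uWord r ^ n} : Set FG)

/-- The natural projection `F → H(r;n)`. -/
def hMk (r : ℚ) (n : ℕ) : FG →* HeckoidGroup r n := PresentedGroup.mk _

/-- The 2-bridge link group `G(K(s)) = ⟨a, b ∣ u_s⟩`. -/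
abbrev TwoBridgeGroup (s : ℚ) := PresentedGroup ({uWord s} : Set FG)

/-- The natural projection `F → G(K(s))`. -/
def tMk (s : ℚ) : FG →* TwoBridgeGroup s := PresentedGroup.mk _

/-- An epimorphism `G(K(s)) → H(r;n)` is upper-meridian-pair-preserving if it is surjective and
the unordered pair of conjugacy classes of the images of `a`, `b` coincides with the unordered
pair of the conjugacy classes of `a`, `b` in `H(r;n)`. -/
def IsUMPP (s r : ℚ) (n : ℕ) (φ : TwoBridgeGroup s →* HeckoidGroup r n) : Prop :=
  Function.Surjective φ ∧
    ((IsConj (φ (tMk s ga)) (hMk r n ga) ∧ IsConj (φ (tMk s gb)) (hMk r n gb)) ∨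
     (IsConj (φ (tMk s ga)) (hMk r n gb) ∧ IsConj (φ (tMk s gb)) (hMk r n ga)))

/-! ### Möbius transformations of `ℚ ∪ {∞}` -/

/-- The Möbius transformation of the matrix `[[A,B],[C,D]]` as a function on
`ℚ ∪ {∞} = Option ℚ` (`none` is `∞`). -/
def mfun (A B C D : ℚ) : Option ℚ → Option ℚ
  | none => if C = 0 then none else some (A / C)
  | some x => if C * x + D = 0 then none else some ((A * x + B) / (C * x + D))

theorem mfun_leftInv (A B C D : ℚ) (h : A * D - B * C ≠ 0) :
    Function.LeftInverse (mfun D (-B) (-C) A) (mfun A B C D) := by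
  intro x
  cases x with
  | none =>
    by_cases hC : C = 0
    · simp [mfun, hC]
    · have h1 : -C * (A / C) + A = 0 := by field_simp; ring
      simp only [mfun, if_neg hC, if_pos h1]
  | some x =>
    by_cases hx : C * x + D = 0
    · have hC : C ≠ 0 := by
        rintro rfl
        simp only [zero_mul, zero_add] at hx
        rw [hx] at h
        simp at h
      simp only [mfun, if_pos hx]
      have h2 : ¬(-C = 0) := by simpa using hC
      simp only [mfun, if_neg h2]
      congr 1
      field_simp
      linarith
    · have key : -C * ((A * x + B) / (C * x + D)) + A = (A * D - B * C) / (C * x + D) := by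
        field_simp
        ring
      have hne : ¬(-C * ((A * x + B) / (C * x + D)) + A = 0) := by
        rw [key]
        exact div_ne_zero h hx
      simp only [mfun, if_neg hx, if_neg hne]
      congr 1
      have e1 : D * ((A * x + B) / (C * x + D)) + -B = ((A * D - B * C) * x) / (C * x + D) := by
        rw [eq_div_iff hx, add_mul, mul_assoc, div_mul_cancel₀ _ hx]
        ring
      rw [e1, key, div_eq_iff (div_ne_zero h hx)]
      field_simp

/-- The Möbius transformation of an invertible matrix `[[A,B],[C,D]]`, as a bijection of
`ℚ ∪ {∞}`. -/
def moebius (A B C D : ℚ) (h : A * D - B * C ≠ 0) : Equiv.Perm (Option ℚ) where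
  toFun := mfun A B C D
  invFun := mfun D (-B) (-C) A
  left_inv := mfun_leftInv A B C D h
  right_inv := fun x => by
    have h' : D * A - -B * -C ≠ 0 := fun hc => h (by linear_combination hc)
    have := mfun_leftInv D (-B) (-C) A h' x
    simpa using this

/-- `ρ(s) = −s`. -/
def rhoPerm : Equiv.Perm (Option ℚ) := moebius (-1) 0 0 1 (by norm_num)

/-- `ρ'(s) = 2 − s`. -/
def rhoPerm' : Equiv.Perm (Option ℚ) := moebius (-1) 2 0 1 (by norm_num)

/-- The parabolic Möbius transformation centered at `r = q/p`, translating by `m` units: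
the Möbius transformation of `[[1+mpq, −mq²],[mp², 1−mpq]]`. -/
def cPerm (r : ℚ) (m : ℤ) : Equiv.Perm (Option ℚ) :=
  moebius (1 + (m : ℚ) * r.den * r.num) (-((m : ℚ) * r.num ^ 2)) ((m : ℚ) * r.den ^ 2)
    (1 - (m : ℚ) * r.den * r.num) (ne_of_eq_of_ne (by ring) one_ne_zero)

/-- The group `Γ_{r,n}` (`m = 2n`): the subgroup of the bijections of `ℚ ∪ {∞}` generated by
`ρ`, `ρ'` and the parabolic `c`. -/
def Gamma (r : ℚ) (m : ℤ) : Subgroup (Equiv.Perm (Option ℚ)) :=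
  Subgroup.closure {rhoPerm, rhoPerm', cPerm r m}

/-- `y` is in the `Γ_{r,n}`-orbit of `x` (where `m = 2n`). -/
def orbitRel (r : ℚ) (m : ℤ) (x y : Option ℚ) : Prop :=
  ∃ g ∈ Gamma r m, g x = y

/-! ### Continued fractions -/

/-- The matrix `[[0,1],[1,b₁]] ⋯ [[0,1],[1,b_l]]` of a continued fraction. -/
def cfMat : List ℤ → Matrix (Fin 2) (Fin 2) ℤ
  | [] => 1
  | b :: L => !![0, 1; 1, b] * cfMat L

/-- The value in `ℚ ∪ {∞}` of the continued fraction
`[b₁, …, b_l] = 1/(b₁ + 1/(b₂ + ⋯ + 1/b_l))`: the image of `0` under the Möbius transformation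
of `cfMat`. -/
def cfValue (L : List ℤ) : Option ℚ :=
  mfun ((cfMat L 0 0 : ℤ) : ℚ) ((cfMat L 0 1 : ℤ) : ℚ) ((cfMat L 1 0 : ℤ) : ℚ)
    ((cfMat L 1 1 : ℤ) : ℚ) (some 0)

/-! ### Small cancellation notions -/

/-- The symmetrized set `R` generated by `u_r^n`: all cyclic permutations of the reduced words
of `u_r^n` and of `u_r^{−n}`. -/
def SymmSet (r : ℚ) (n : ℕ) : Set FG :=
  {w | (∃ k, w.toWord = (uWord r ^ n).toWord.rotate k) ∨
       (∃ k, w.toWord = ((uWord r ^ n)⁻¹).toWord.rotate k)}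

/-- A piece relative to `R`: a nonempty word which is a common initial segment of two distinct
elements of `R`. -/
def IsPiece (r : ℚ) (n : ℕ) (w : FG) : Prop :=
  w ≠ 1 ∧ ∃ x ∈ SymmSet r n, ∃ y ∈ SymmSet r n, x ≠ y ∧
    w.toWord <+: x.toWord ∧ w.toWord <+: y.toWord

/-- `w` is a product of `k` pieces: a concatenation, without cancellation, of `k` pieces. -/
def IsProductOfPieces (r : ℚ) (n : ℕ) (k : ℕ) (w : FG) : Prop :=
  ∃ ws : List FG, ws.length = k ∧ (∀ v ∈ ws, IsPiece r n v) ∧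
    w.toWord = (ws.map FreeGroup.toWord).flatten

/-- The product `x * y` is reduced without cancellation. -/
def NoCancel (x y : FG) : Prop := (x * y).toWord = x.toWord ++ y.toWord

/-- Small cancellation condition `C(p)`: no element of `R` is a product of fewer than `p`
pieces. -/
def SatisfiesC (r : ℚ) (n : ℕ) (p : ℕ) : Prop :=
  ∀ w ∈ SymmSet r n, ∀ k < p, ¬ IsProductOfPieces r n k w

/-- Small cancellation condition `T(4)`. -/
def SatisfiesT4 (r : ℚ) (n : ℕ) : Prop :=
  ∀ r₁ ∈ SymmSet r n, ∀ r₂ ∈ SymmSet r n, ∀ r₃ ∈ SymmSet r n,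
    r₂ ≠ r₁⁻¹ → r₃ ≠ r₂⁻¹ → r₁ ≠ r₃⁻¹ →
    NoCancel r₁ r₂ ∨ NoCancel r₂ r₃ ∨ NoCancel r₃ r₁

/-- `w` is a subword of the cyclic word `(u)`: an initial segment of some cyclic permutation
of the reduced word of `u`. -/
def IsCyclicSubword (w u : FG) : Prop := ∃ k, w.toWord <+: u.toWord.rotate k

end Heckoid

namespace Heckoid

/-- The sequence
`(ε₁·a, m·c₁, −ε₁·a⁻¹, 2c₂, ε₂·a, m·c₃, −ε₂·a⁻¹, 2c₄, …, ε_t·a, m·c_{2t−1}, −ε_t·a⁻¹)`,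
where `a = (a₁, …, a_k)` and `a⁻¹` is the reversed sequence; the entry `2c_{2i}` is inserted
between the `i`-th and `(i+1)`-st blocks. Here `eps i` is `ε_{i+1}` and `cs j` is `c_j`. -/
def hekSeq (A : List ℤ) (m : ℤ) (t : ℕ) (eps cs : ℕ → ℤ) : List ℤ :=
  ((List.range t).map fun i =>
    (if i = 0 then ([] : List ℤ) else [2 * cs (2 * i)]) ++
      (A.map fun x => eps i * x) ++ [m * cs (2 * i + 1)] ++
      (A.reverse.map fun x => -eps i * x)).flatten

theorem mfun_none (a b c d : ℚ) : mfun a b c d none = if c = 0 then none else some (a/c) := rfl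

theorem mfun_some (a b c d x : ℚ) :
    mfun a b c d (some x) = if c * x + d = 0 then none else some ((a*x+b)/(c*x+d)) := rfl

theorem mfun_mul (a b c d a' b' c' d' : ℚ) (h : a*d - b*c ≠ 0) (h' : a'*d' - b'*c' ≠ 0)
    (x : Option ℚ) :
    mfun a b c d (mfun a' b' c' d' x) =
      mfun (a*a'+b*c') (a*b'+b*d') (c*a'+d*c') (c*b'+d*d') x := by
  cases x with
  | none =>
    by_cases hc' : c' = 0
    · have ha' : a' ≠ 0 := by rintro rfl; simp [hc'] at h'
      have hiff : c*a' + d*c' = 0 ↔ c = 0 := by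
        subst hc'
        rw [mul_zero, add_zero, mul_eq_zero]
        simp [ha']
      rw [mfun_none, mfun_none, if_pos hc', mfun_none]
      by_cases hc : c = 0
      · rw [if_pos hc, if_pos (hiff.2 hc)]
      · rw [if_neg hc, if_neg (fun hh => hc (hiff.1 hh))]
        subst hc'
        congr 1
        rw [div_eq_div_iff hc (fun hh => hc (hiff.1 hh))]
        try ring
    · rw [mfun_none, if_neg hc', mfun_some, mfun_none]
      have key : c * (a'/c') + d = (c*a' + d*c')/c' := by field_simp
      by_cases hz : c*a' + d*c' = 0
      · rw [if_pos (by rw [key, hz, zero_div]), if_pos hz]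
      · rw [if_neg (by rw [key]; exact div_ne_zero hz hc'), if_neg hz]
        congr 1
        rw [key]
        field_simp
        try ring
  | some x =>
    by_cases hd' : c'*x + d' = 0
    · have hnum : a'*x + b' ≠ 0 := by
        intro h0
        apply h'
        linear_combination a' * hd' - c' * h0
      rw [mfun_some, if_pos hd', mfun_none, mfun_some]
      have key : (c*a'+d*c')*x + (c*b'+d*d') = c*(a'*x+b') := by linear_combination d * hd'
      by_cases hc : c = 0
      · rw [if_pos hc, if_pos (by rw [key, hc, zero_mul])]
      · rw [if_neg hc, if_neg (by rw [key]; exact mul_ne_zero hc hnum)]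
        congr 1
        rw [key]
        rw [div_eq_div_iff hc (mul_ne_zero hc hnum)]
        linear_combination (-(c*b)) * hd'
    · rw [mfun_some, if_neg hd', mfun_some, mfun_some]
      have key : c * ((a'*x+b')/(c'*x+d')) + d = ((c*a'+d*c')*x + (c*b'+d*d'))/(c'*x+d') := by
        rw [eq_div_iff hd', add_mul, mul_assoc, div_mul_cancel₀ _ hd']; ring
      by_cases hz : (c*a'+d*c')*x + (c*b'+d*d') = 0
      · rw [if_pos (by rw [key, hz, zero_div]), if_pos hz]
      · rw [if_neg (by rw [key]; exact div_ne_zero hz hd'), if_neg hz]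
        congr 1
        have key2 : a * ((a'*x+b')/(c'*x+d')) + b = ((a*a'+b*c')*x + (a*b'+b*d'))/(c'*x+d') := by
          rw [eq_div_iff hd', add_mul, mul_assoc, div_mul_cancel₀ _ hd']; ring
        rw [key, key2, div_div_div_cancel_right₀ hd']
theorem mfun_neg (a b c d : ℚ) (x : Option ℚ) : mfun (-a) (-b) (-c) (-d) x = mfun a b c d x := by
  cases x with
  | none =>
    rw [mfun_none, mfun_none]
    simp only [neg_eq_zero]
    split_ifs with h
    · rfl
    · rw [neg_div_neg_eq]
  | some x =>
    rw [mfun_some, mfun_some]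
    simp only [show -c * x + -d = -(c*x+d) from by ring, neg_eq_zero,
      show -a * x + -b = -(a*x+b) from by ring]
    split_ifs with h
    · rfl
    · rw [neg_div_neg_eq]

/-- Möbius function of an integer 2×2 matrix. -/
def mOf (M : Matrix (Fin 2) (Fin 2) ℤ) : Option ℚ → Option ℚ :=
  mfun ((M 0 0 : ℤ) : ℚ) ((M 0 1 : ℤ) : ℚ) ((M 1 0 : ℤ) : ℚ) ((M 1 1 : ℤ) : ℚ)

theorem cfValue_eq_mOf (L : List ℤ) : cfValue L = mOf (cfMat L) (some 0) := rfl

theorem mOf_mul (M M' : Matrix (Fin 2) (Fin 2) ℤ) (h : M.det ≠ 0) (h' : M'.det ≠ 0)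
    (x : Option ℚ) : mOf (M * M') x = mOf M (mOf M' x) := by
  rw [Matrix.det_fin_two] at h h'
  have h2 : ((M 0 0 : ℤ):ℚ) * (M 1 1 : ℤ) - (M 0 1 : ℤ) * (M 1 0 : ℤ) ≠ 0 := by
    intro hh; apply h; exact_mod_cast hh
  have h2' : ((M' 0 0 : ℤ):ℚ) * (M' 1 1 : ℤ) - (M' 0 1 : ℤ) * (M' 1 0 : ℤ) ≠ 0 := by
    intro hh; apply h'; exact_mod_cast hh
  simp only [mOf, Matrix.mul_apply, Fin.sum_univ_two, Int.cast_add, Int.cast_mul]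
  exact (mfun_mul _ _ _ _ _ _ _ _ h2 h2' x).symm

theorem mOf_neg (M : Matrix (Fin 2) (Fin 2) ℤ) (x : Option ℚ) : mOf (-M) x = mOf M x := by
  simp only [mOf, Matrix.neg_apply, Int.cast_neg]
  exact mfun_neg _ _ _ _ x

theorem cfMat_append (L1 L2 : List ℤ) : cfMat (L1 ++ L2) = cfMat L1 * cfMat L2 := by
  induction L1 with
  | nil => simp [cfMat]
  | cons b L ih => simp [cfMat, ih, Matrix.mul_assoc]

theorem det_cfMat (L : List ℤ) : (cfMat L).det = (-1) ^ L.length := by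
  induction L with
  | nil => simp [cfMat]
  | cons b L ih =>
    rw [cfMat, Matrix.det_mul, ih]
    rw [show (!![0,1;1,b] : Matrix (Fin 2) (Fin 2) ℤ).det = -1 by
      rw [Matrix.det_fin_two_of]; ring]
    rw [List.length_cons, pow_succ]
    ring

theorem det_cfMat_ne_zero (L : List ℤ) : (cfMat L).det ≠ 0 := by
  rw [det_cfMat]
  exact pow_ne_zero _ (by norm_num)

theorem cfMat_reverse (L : List ℤ) : cfMat L.reverse = (cfMat L).transpose := by
  induction L with
  | nil => simp [cfMat]
  | cons b L ih =>
    rw [List.reverse_cons, cfMat_append, ih,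
      show cfMat [b] = !![0,1;1,b] from by simp [cfMat], cfMat, Matrix.transpose_mul]
    congr 1
    ext i j; fin_cases i <;> fin_cases j <;> simp

/-- diag(1,-1) -/
def Dm : Matrix (Fin 2) (Fin 2) ℤ := !![1,0;0,-1]

theorem Dm_sq : Dm * Dm = 1 := by
  ext i j; fin_cases i <;> fin_cases j <;> simp [Dm, Matrix.mul_apply, Fin.sum_univ_two,
    Matrix.one_apply]

theorem cfMat_neg (L : List ℤ) :
    cfMat (L.map fun x => -x) = ((-1)^L.length : ℤ) • (Dm * cfMat L * Dm) := by
  induction L with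
  | nil => simp [cfMat, Matrix.mul_one, Dm_sq]
  | cons b L ih =>
    rw [List.map_cons, cfMat, ih,
      show (!![0,1;1,-b] : Matrix (Fin 2) (Fin 2) ℤ) = (-1 : ℤ) • (Dm * !![0,1;1,b] * Dm) from by
        ext i j; fin_cases i <;> fin_cases j <;> simp [Dm, Matrix.mul_apply, Fin.sum_univ_two],
      Matrix.smul_mul, Matrix.mul_smul, smul_smul, cfMat, List.length_cons, pow_succ]
    congr 1
    · ring
    · calc Dm * !![0,1;1,b] * Dm * (Dm * cfMat L * Dm)
          = Dm * (!![0,1;1,b] * ((Dm * Dm) * cfMat L)) * Dm := by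
            simp only [Matrix.mul_assoc]
        _ = Dm * (!![0,1;1,b] * cfMat L) * Dm := by rw [Dm_sq, Matrix.one_mul]
theorem cfMat_entries (r : ℚ) (hr0 : 0 < r) (A : List ℤ) (hcf : cfValue A = some r) :
    ∃ σ : ℤ, (σ = 1 ∨ σ = -1) ∧ cfMat A 0 1 = σ * r.num ∧ cfMat A 1 1 = σ * (r.den : ℤ) := by
  set N := cfMat A with hN
  rw [cfValue_eq_mOf, mOf, mfun_some] at hcf
  by_cases hden : ((N 1 0 : ℤ) : ℚ) * 0 + (N 1 1 : ℤ) = 0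
  · rw [if_pos hden] at hcf; exact absurd hcf (by simp)
  rw [if_neg hden] at hcf
  have hd0 : ((N 1 1 : ℤ) : ℚ) ≠ 0 := by
    intro hh; exact hden (by rw [hh]; ring)
  have hval : ((N 0 1 : ℤ) : ℚ) / (N 1 1 : ℤ) = r := by
    have := Option.some_injective _ hcf
    rw [← this]; congr 1 <;> ring
  have hq0 : r.num ≠ 0 := Rat.num_ne_zero.2 (ne_of_gt hr0)
  have hcross : N 0 1 * (r.den : ℤ) = r.num * N 1 1 := by
    have hrd : r = (r.num : ℚ) / (r.den : ℚ) := (Rat.num_div_den r).symm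
    rw [hrd] at hval
    have hp0 : ((r.den : ℤ) : ℚ) ≠ 0 := by
      simp [Rat.den_ne_zero]
    rw [div_eq_div_iff hd0 (by push_cast at hp0 ⊢; exact hp0)] at hval
    exact_mod_cast hval
  have hdet : N 0 0 * N 1 1 - N 0 1 * N 1 0 = (-1)^A.length := by
    have := det_cfMat A
    rw [← hN, Matrix.det_fin_two] at this
    exact this
  have hcop : IsCoprime (N 0 1) (N 1 1) := by
    refine ⟨(-1)^A.length * (- N 1 0), (-1)^A.length * N 0 0, ?_⟩
    have h2 : ((-1 : ℤ))^A.length * (-1)^A.length = 1 := by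
      rw [← pow_add]
      exact (neg_one_pow_eq_one_iff_even (by norm_num)).2 (by exact Even.add_self _)
    linear_combination ((-1:ℤ))^A.length * hdet + h2
  have hcop2 : IsCoprime r.num ((r.den : ℤ)) := by
    rw [Int.isCoprime_iff_gcd_eq_one]
    exact r.reduced
  have h1 : N 0 1 ∣ r.num := by
    apply hcop.dvd_of_dvd_mul_right
    exact ⟨(r.den : ℤ), by linarith [hcross]⟩
  have h2 : r.num ∣ N 0 1 := by
    apply hcop2.dvd_of_dvd_mul_right
    exact ⟨N 1 1, by linarith [hcross]⟩
  rcases Int.associated_iff.1 (associated_of_dvd_dvd h2 h1) with he | he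
  · refine ⟨1, Or.inl rfl, by omega, ?_⟩
    rw [one_mul]
    have : r.num * (r.den : ℤ) = r.num * N 1 1 := by rw [← hcross, ← he]
    exact (mul_left_cancel₀ hq0 this).symm
  · refine ⟨-1, Or.inr rfl, by omega, ?_⟩
    have : r.num * (-(r.den : ℤ)) = r.num * N 1 1 := by
      rw [← hcross]
      rw [show N 0 1 = -r.num from by omega]
      ring
    rw [← mul_left_cancel₀ hq0 this]
    ring
def Smat : Matrix (Fin 2) (Fin 2) ℤ := !![0,1;1,0]
def Tmm (k : ℤ) : Matrix (Fin 2) (Fin 2) ℤ := !![1,k;0,1]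
def Cm (p q j : ℤ) : Matrix (Fin 2) (Fin 2) ℤ := !![1 + j*p*q, -(j*q^2); j*p^2, 1 - j*p*q]

theorem det_Smat : Smat.det = -1 := by rw [Smat, Matrix.det_fin_two_of]; ring
theorem det_Tmm (k : ℤ) : (Tmm k).det = 1 := by rw [Tmm, Matrix.det_fin_two_of]; ring
theorem det_Cm (p q j : ℤ) : (Cm p q j).det = 1 := by rw [Cm, Matrix.det_fin_two_of]; ring
theorem det_Dm : Dm.det = -1 := by rw [Dm, Matrix.det_fin_two_of]; ring

set_option maxHeartbeats 1000000 in
theorem blockKey (p q σ e w : ℤ) (A : List ℤ) (hσ : σ = 1 ∨ σ = -1) (he : e = 1 ∨ e = -1)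
    (hb : cfMat A 0 1 = σ * q) (hd : cfMat A 1 1 = σ * p) :
    cfMat ((A.map fun x => e * x) ++ ([w] ++ A.reverse.map fun x => -e * x))
      = (if e = 1 then 1 else Dm) * Cm p q (e * (-1)^A.length * w) *
          (if e = 1 then 1 else Dm) * Smat := by
  have hdet0 := det_cfMat A
  rw [Matrix.det_fin_two] at hdet0
  have hN : cfMat A = !![cfMat A 0 0, σ*q; cfMat A 1 0, σ*p] := by
    rw [← hb, ← hd]; exact Matrix.eta_fin_two _
  rw [hb, hd] at hdet0
  set a := cfMat A 0 0 with ha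
  set c₀ := cfMat A 1 0 with hc₀
  have hδ : ((-1:ℤ))^A.length = 1 ∨ ((-1:ℤ))^A.length = -1 := by
    rcases Nat.even_or_odd A.length with h | h
    · left; exact h.neg_one_pow
    · right; exact h.neg_one_pow
  rcases he with rfl | rfl
  · rw [if_pos rfl]
    simp only [one_mul, neg_one_mul, Matrix.mul_one, List.map_map]
    rw [show (A.map fun x => x) = A from by simp]
    rw [cfMat_append, cfMat_append, cfMat_neg, cfMat_reverse, List.length_reverse,
        show cfMat [w] = !![0,1;1,w] from by simp [cfMat], hN]
    rw [show (!![a, σ*q; c₀, σ*p] : Matrix (Fin 2) (Fin 2) ℤ).transpose = !![a, c₀; σ*q, σ*p] from by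
      ext i j; fin_cases i <;> fin_cases j <;> simp]
    rcases hσ with rfl | rfl <;> rcases hδ with h1 | h1 <;> rw [h1] <;> rw [h1] at hdet0 <;>
      · ext i j
        fin_cases i <;> fin_cases j <;>
          simp [Cm, Smat, Dm, Matrix.mul_apply, Fin.sum_univ_two, Matrix.smul_apply] <;>
          first
            | linear_combination (-w) * hdet0
            | linear_combination w * hdet0
            | linear_combination (1-w) * hdet0
            | linear_combination (w-1) * hdet0
            | linear_combination (1+w) * hdet0
            | linear_combination (-1-w) * hdet0
            | linear_combination hdet0
            | linear_combination -hdet0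
            | ring
  · rw [if_neg (by norm_num)]
    simp only [neg_one_mul, neg_neg]
    rw [show (A.reverse.map fun x => 1 * x) = A.reverse from by simp]
    rw [cfMat_append, cfMat_append, cfMat_neg, cfMat_reverse,
        show cfMat [w] = !![0,1;1,w] from by simp [cfMat], hN]
    rw [show (!![a, σ*q; c₀, σ*p] : Matrix (Fin 2) (Fin 2) ℤ).transpose = !![a, c₀; σ*q, σ*p] from by
      ext i j; fin_cases i <;> fin_cases j <;> simp]
    rcases hσ with rfl | rfl <;> rcases hδ with h1 | h1 <;> rw [h1] <;> rw [h1] at hdet0 <;>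
      · ext i j
        fin_cases i <;> fin_cases j <;>
          simp [Cm, Smat, Dm, Matrix.mul_apply, Fin.sum_univ_two, Matrix.smul_apply] <;>
          first
            | linear_combination (-w) * hdet0
            | linear_combination w * hdet0
            | linear_combination (1-w) * hdet0
            | linear_combination (w-1) * hdet0
            | linear_combination (1+w) * hdet0
            | linear_combination (-1-w) * hdet0
            | linear_combination hdet0
            | linear_combination -hdet0
            | ring
/-! ### Permutation lemmas -/

def tPerm (k : ℤ) : Equiv.Perm (Option ℚ) := moebius 1 (k:ℚ) 0 1 (by norm_num)

theorem tPerm_apply (k : ℤ) (x : Option ℚ) : tPerm k x = mfun 1 (k:ℚ) 0 1 x := rfl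

theorem rhoPerm_apply (x : Option ℚ) : rhoPerm x = mfun (-1) 0 0 1 x := rfl
theorem rhoPerm'_apply (x : Option ℚ) : rhoPerm' x = mfun (-1) 2 0 1 x := rfl

theorem cPerm_apply (r : ℚ) (j : ℤ) (x : Option ℚ) :
    cPerm r j x = mfun (1 + (j:ℚ)*r.den*r.num) (-((j:ℚ)*r.num^2)) ((j:ℚ)*r.den^2)
      (1 - (j:ℚ)*r.den*r.num) x := rfl

theorem cPerm_det (r : ℚ) (j : ℤ) :
    (1 + (j:ℚ)*r.den*r.num) * (1 - (j:ℚ)*r.den*r.num) - (-((j:ℚ)*r.num^2)) * ((j:ℚ)*r.den^2) ≠ 0 := by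
  have h : (1 + (j:ℚ)*r.den*r.num) * (1 - (j:ℚ)*r.den*r.num)
      - (-((j:ℚ)*r.num^2)) * ((j:ℚ)*r.den^2) = 1 := by ring
  rw [h]; norm_num

theorem cPerm_mul (r : ℚ) (a b : ℤ) : cPerm r a * cPerm r b = cPerm r (a+b) := by
  ext x
  rw [Equiv.Perm.mul_apply, cPerm_apply, cPerm_apply, cPerm_apply,
    mfun_mul _ _ _ _ _ _ _ _ (cPerm_det r a) (cPerm_det r b)]
  congr 1 <;> push_cast <;> ring

theorem cPerm_zero (r : ℚ) : cPerm r 0 = 1 := by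
  ext x
  rw [cPerm_apply]
  cases x with
  | none => simp [mfun]
  | some y => simp [mfun]

theorem cPerm_inv (r : ℚ) (j : ℤ) : (cPerm r j)⁻¹ = cPerm r (-j) := by
  rw [inv_eq_iff_mul_eq_one, cPerm_mul]
  rw [show j + -j = 0 by ring, cPerm_zero]

theorem cPerm_zpow (r : ℚ) (j : ℤ) : ∀ k : ℤ, cPerm r j ^ k = cPerm r (j * k) := by
  have hnat : ∀ n : ℕ, cPerm r j ^ n = cPerm r (j * n) := by
    intro n
    induction n with
    | zero => simp [cPerm_zero]
    | succ n ih =>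
      rw [pow_succ, ih, cPerm_mul]
      congr 1
      push_cast; ring
  intro k
  induction k using Int.rec with
  | ofNat n => rw [Int.ofNat_eq_coe, zpow_natCast, hnat]
  | negSucc n =>
    rw [zpow_negSucc, hnat, cPerm_inv]
    congr 1
    rw [Int.negSucc_eq]
    push_cast; ring

theorem tPerm_mul (a b : ℤ) : tPerm a * tPerm b = tPerm (a+b) := by
  ext x
  rw [Equiv.Perm.mul_apply, tPerm_apply, tPerm_apply, tPerm_apply,
    mfun_mul _ _ _ _ _ _ _ _ (by norm_num) (by norm_num)]
  congr 1 <;> push_cast <;> ring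

theorem tPerm_zero : tPerm 0 = 1 := by
  ext x
  rw [tPerm_apply]
  cases x with
  | none => simp [mfun]
  | some y => simp [mfun]

theorem tPerm_inv (a : ℤ) : (tPerm a)⁻¹ = tPerm (-a) := by
  rw [inv_eq_iff_mul_eq_one, tPerm_mul]
  rw [show a + -a = 0 by ring, tPerm_zero]

theorem tPerm_zpow (j : ℤ) : ∀ k : ℤ, tPerm j ^ k = tPerm (j * k) := by
  have hnat : ∀ n : ℕ, tPerm j ^ n = tPerm (j * n) := by
    intro n
    induction n with
    | zero => simp [tPerm_zero]
    | succ n ih =>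
      rw [pow_succ, ih, tPerm_mul]
      congr 1
      push_cast; ring
  intro k
  induction k using Int.rec with
  | ofNat n => rw [Int.ofNat_eq_coe, zpow_natCast, hnat]
  | negSucc n =>
    rw [zpow_negSucc, hnat, tPerm_inv]
    congr 1
    rw [Int.negSucc_eq]
    push_cast; ring

theorem tPerm_two : tPerm 2 = rhoPerm' * rhoPerm := by
  ext x
  rw [Equiv.Perm.mul_apply, tPerm_apply, rhoPerm_apply, rhoPerm'_apply,
    mfun_mul _ _ _ _ _ _ _ _ (by norm_num) (by norm_num)]
  congr 1 <;> norm_num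

theorem rhoPerm_mem (r : ℚ) (m : ℤ) : rhoPerm ∈ Gamma r m :=
  Subgroup.subset_closure (by simp)

theorem rhoPerm'_mem (r : ℚ) (m : ℤ) : rhoPerm' ∈ Gamma r m :=
  Subgroup.subset_closure (by simp)

theorem cPerm_mem (r : ℚ) (m : ℤ) : cPerm r m ∈ Gamma r m :=
  Subgroup.subset_closure (by simp)

theorem cPerm_pow_mem (r : ℚ) (m : ℤ) (k : ℤ) : cPerm r (m * k) ∈ Gamma r m := by
  rw [← cPerm_zpow]
  exact zpow_mem (cPerm_mem r m) k

theorem tPerm_even_mem (r : ℚ) (m : ℤ) (c : ℤ) : tPerm (2 * c) ∈ Gamma r m := by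
  rw [← tPerm_zpow]
  exact zpow_mem (by rw [tPerm_two]; exact mul_mem (rhoPerm'_mem r m) (rhoPerm_mem r m)) c

theorem rhoPerm_inv : rhoPerm⁻¹ = rhoPerm := by
  rw [inv_eq_iff_mul_eq_one]
  ext x
  rw [Equiv.Perm.mul_apply, rhoPerm_apply, rhoPerm_apply,
    mfun_mul _ _ _ _ _ _ _ _ (by norm_num) (by norm_num)]
  cases x with
  | none => simp [mfun]
  | some y => simp [mfun]

theorem rhoPerm'_inv : rhoPerm'⁻¹ = rhoPerm' := by
  rw [inv_eq_iff_mul_eq_one]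
  ext x
  rw [Equiv.Perm.mul_apply, rhoPerm'_apply, rhoPerm'_apply,
    mfun_mul _ _ _ _ _ _ _ _ (by norm_num) (by norm_num)]
  cases x with
  | none => simp [mfun]
  | some y => simp [mfun]; try ring_nf

/-! ### matching perms with integer matrices -/

theorem mOf_one (x : Option ℚ) : mOf 1 x = x := by
  rw [mOf]
  have h0 : ((1 : Matrix (Fin 2) (Fin 2) ℤ) 0 0) = 1 := rfl
  have h1 : ((1 : Matrix (Fin 2) (Fin 2) ℤ) 0 1) = 0 := rfl
  have h2 : ((1 : Matrix (Fin 2) (Fin 2) ℤ) 1 0) = 0 := rfl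
  have h3 : ((1 : Matrix (Fin 2) (Fin 2) ℤ) 1 1) = 1 := rfl
  rw [h0, h1, h2, h3]
  cases x with
  | none => simp [mfun]
  | some y => simp [mfun]

theorem mOf_Dm (x : Option ℚ) : mOf Dm x = rhoPerm x := by
  rw [mOf, rhoPerm_apply, Dm]
  rw [show ((!![1,0;0,-1] : Matrix (Fin 2) (Fin 2) ℤ) 0 0) = 1 from rfl,
    show ((!![1,0;0,-1] : Matrix (Fin 2) (Fin 2) ℤ) 0 1) = 0 from rfl,
    show ((!![1,0;0,-1] : Matrix (Fin 2) (Fin 2) ℤ) 1 0) = 0 from rfl,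
    show ((!![1,0;0,-1] : Matrix (Fin 2) (Fin 2) ℤ) 1 1) = -1 from rfl]
  push_cast
  rw [show ((1:ℚ)) = -(-1) by norm_num]
  rw [show ((0:ℚ)) = -(0:ℚ) by norm_num]
  rw [show ((-1:ℚ)) = -(1:ℚ) by norm_num]
  exact mfun_neg (-1) 0 0 1 x

theorem mOf_Tmm (k : ℤ) (x : Option ℚ) : mOf (Tmm k) x = tPerm k x := by
  rw [mOf, tPerm_apply, Tmm]
  norm_num

theorem mOf_Cm (r : ℚ) (j : ℤ) (x : Option ℚ) :
    mOf (Cm (r.den : ℤ) r.num j) x = cPerm r j x := by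
  rw [mOf, cPerm_apply, Cm]
  rw [show (!![1 + j*(r.den:ℤ)*r.num, -(j*r.num^2); j*(r.den:ℤ)^2, 1 - j*(r.den:ℤ)*r.num] 0 0)
      = 1 + j*(r.den:ℤ)*r.num from rfl,
    show (!![1 + j*(r.den:ℤ)*r.num, -(j*r.num^2); j*(r.den:ℤ)^2, 1 - j*(r.den:ℤ)*r.num] 0 1)
      = -(j*r.num^2) from rfl,
    show (!![1 + j*(r.den:ℤ)*r.num, -(j*r.num^2); j*(r.den:ℤ)^2, 1 - j*(r.den:ℤ)*r.num] 1 0)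
      = j*(r.den:ℤ)^2 from rfl,
    show (!![1 + j*(r.den:ℤ)*r.num, -(j*r.num^2); j*(r.den:ℤ)^2, 1 - j*(r.den:ℤ)*r.num] 1 1)
      = 1 - j*(r.den:ℤ)*r.num from rfl]
  push_cast
  rfl
/-! ### hekSeq structure -/

theorem hekSeq_zero (A : List ℤ) (m : ℤ) (eps cs : ℕ → ℤ) : hekSeq A m 0 eps cs = [] := by
  simp [hekSeq]

theorem hekSeq_succ (A : List ℤ) (m : ℤ) (t : ℕ) (eps cs : ℕ → ℤ) :
    hekSeq A m (t+1) eps cs = hekSeq A m t eps cs ++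
      ((if t = 0 then [] else [2 * cs (2*t)]) ++
        ((A.map fun x => eps t * x) ++ ([m * cs (2*t+1)] ++ (A.reverse.map fun x => -eps t * x)))) := by
  rw [hekSeq, hekSeq, List.range_succ, List.map_append, List.flatten_append]
  simp [List.append_assoc]

theorem hekSeq_congr (A : List ℤ) (m : ℤ) (t : ℕ) (e1 e2 c1 c2 : ℕ → ℤ)
    (he : ∀ i < t, e1 i = e2 i) (hc : ∀ j, 0 < j → j < 2*t → c1 j = c2 j) :
    hekSeq A m t e1 c1 = hekSeq A m t e2 c2 := by
  rw [hekSeq, hekSeq]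
  congr 1
  apply List.map_congr_left
  intro i hi
  rw [List.mem_range] at hi
  have he' := he i hi
  congr 2
  · congr 1
    · split_ifs with h
      · rfl
      · rw [hc (2*i) (by omega) (by omega)]
    · rw [he']
  · rw [hc (2*i+1) (by omega) (by omega)]
  · rw [he']

theorem hekSeq_neg (A : List ℤ) (m : ℤ) (t : ℕ) (eps cs : ℕ → ℤ) :
    hekSeq A m t (fun i => -(eps i)) (fun j => -(cs j)) =
      (hekSeq A m t eps cs).map (fun x => -x) := by
  rw [hekSeq, hekSeq, List.map_flatten, List.map_map]
  congr 1
  apply List.map_congr_left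
  intro i _
  simp only [Function.comp_apply, List.map_append, List.map_map]
  congr 2
  · congr 1
    · split_ifs with h
      · rfl
      · simp only [List.map_cons, List.map_nil]
        congr 1
        ring
    · congr 1
      funext x
      simp only [Function.comp_apply]
      ring
  · simp only [List.map_cons, List.map_nil]
    congr 1
    ring
  · congr 1
    funext x
    simp only [Function.comp_apply]
    ring

theorem cfValue_neg (L : List ℤ) :
    cfValue (L.map fun x => -x) = Option.map (fun v => -v) (cfValue L) := by
  rw [cfValue_eq_mOf, cfValue_eq_mOf, cfMat_neg]
  have hδ : ((-1:ℤ))^L.length = 1 ∨ ((-1:ℤ))^L.length = -1 := by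
    rcases Nat.even_or_odd L.length with h | h
    · left; exact h.neg_one_pow
    · right; exact h.neg_one_pow
  have hDmM : mOf (Dm * cfMat L * Dm) (some 0) =
      Option.map (fun v => -v) (mOf (cfMat L) (some 0)) := by
    rw [mOf_mul _ _ (by rw [Matrix.det_mul, det_Dm]; simpa using det_cfMat_ne_zero L)
        (by rw [det_Dm]; norm_num),
      mOf_mul _ _ (by rw [det_Dm]; norm_num) (det_cfMat_ne_zero L)]
    rw [show mOf Dm (some 0) = some 0 from by rw [mOf_Dm, rhoPerm_apply, mfun_some]; norm_num]
    rcases hM : mOf (cfMat L) (some 0) with _ | v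
    · rw [mOf_Dm, rhoPerm_apply, mfun_none]
      norm_num
      try rfl
    · rw [mOf_Dm, rhoPerm_apply, mfun_some]
      norm_num
  rcases hδ with h1 | h1
  · rw [h1, one_smul, hDmM]
  · rw [h1, neg_one_smul, mOf_neg, hDmM]
/-! ### Representation of permutations by integer matrices -/

def Rep (g : Equiv.Perm (Option ℚ)) (M : Matrix (Fin 2) (Fin 2) ℤ) : Prop :=
  ∀ x, g x = mOf M x

theorem Rep.mul {g h : Equiv.Perm (Option ℚ)} {M N : Matrix (Fin 2) (Fin 2) ℤ}
    (hg : Rep g M) (hh : Rep h N) (hM : M.det ≠ 0) (hN : N.det ≠ 0) :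
    Rep (g * h) (M * N) := by
  intro x
  rw [Equiv.Perm.mul_apply, mOf_mul _ _ hM hN, hh, hg]

theorem Rep_one : Rep 1 1 := fun x => (mOf_one x).symm
theorem Rep_rho : Rep rhoPerm Dm := fun x => (mOf_Dm x).symm
theorem Rep_t (k : ℤ) : Rep (tPerm k) (Tmm k) := fun x => (mOf_Tmm k x).symm
theorem Rep_c (r : ℚ) (j : ℤ) : Rep (cPerm r j) (Cm (r.den : ℤ) r.num j) :=
  fun x => (mOf_Cm r j x).symm

theorem Smat_sq : Smat * Smat = 1 := by
  ext i j; fin_cases i <;> fin_cases j <;>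
    simp [Smat, Matrix.mul_apply, Fin.sum_univ_two, Matrix.one_apply]

theorem Smat_mul_T (k : ℤ) (X : Matrix (Fin 2) (Fin 2) ℤ) :
    Smat * (Tmm k * X) = !![0,1;1,k] * X := by
  rw [← Matrix.mul_assoc]
  congr 1
  ext i j; fin_cases i <;> fin_cases j <;>
    simp [Smat, Tmm, Matrix.mul_apply, Fin.sum_univ_two]

theorem cfMat_single (k : ℤ) : cfMat [k] = !![0,1;1,k] := by
  simp [cfMat]

theorem det_cfS (L : List ℤ) : (cfMat L * Smat).det ≠ 0 := by
  rw [Matrix.det_mul, det_Smat]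
  simpa using det_cfMat_ne_zero L

theorem det_DCD (p q j : ℤ) : (Dm * Cm p q j * Dm).det ≠ 0 := by
  rw [Matrix.det_mul, Matrix.det_mul, det_Dm, det_Cm]; norm_num

/-- The main induction for the `⟸` direction. -/
theorem forward_rep (r : ℚ) (m : ℤ) (A : List ℤ) (σ : ℤ) (hσ : σ = 1 ∨ σ = -1)
    (hb : cfMat A 0 1 = σ * r.num) (hd : cfMat A 1 1 = σ * (r.den : ℤ)) :
    ∀ t (eps cs : ℕ → ℤ), 0 < t → (∀ i < t, eps i = 1 ∨ eps i = -1) →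
      ∃ g ∈ Gamma r m, Rep g (cfMat (hekSeq A m t eps cs) * Smat) := by
  intro t
  induction t with
  | zero => intro _ _ h; omega
  | succ t ih =>
    intro eps cs _ heps
    have hblock := blockKey (r.den : ℤ) r.num σ (eps t) (m * cs (2*t+1)) A hσ
      (heps t (by omega)) hb hd
    rcases Nat.eq_zero_or_pos t with rfl | htpos
    · -- base case t+1 = 1
      have h1 : hekSeq A m 1 eps cs =
          (A.map fun x => eps 0 * x) ++ ([m * cs (2*0+1)] ++ A.reverse.map fun x => -eps 0 * x) := by
        rw [hekSeq_succ, hekSeq_zero, if_pos rfl]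
        simp
      rw [h1, hblock]
      rcases heps 0 (by omega) with he | he
      · rw [he, if_pos rfl]
        rw [show (1 : ℤ) * (-1)^A.length * (m * cs (2*0+1)) =
            m * ((-1)^A.length * cs (2*0+1)) from by ring]
        refine ⟨cPerm r (m * ((-1)^A.length * cs (2*0+1))), cPerm_pow_mem r m _, ?_⟩
        rw [show (1 : Matrix (Fin 2) (Fin 2) ℤ) *
              Cm (r.den : ℤ) r.num (m * ((-1)^A.length * cs (2*0+1))) * 1 * Smat * Smat =
            Cm (r.den : ℤ) r.num (m * ((-1)^A.length * cs (2*0+1))) from by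
          rw [Matrix.one_mul, Matrix.mul_one, Matrix.mul_assoc, Smat_sq, Matrix.mul_one]]
        exact Rep_c r _
      · rw [he, if_neg (by norm_num)]
        rw [show (-1 : ℤ) * (-1)^A.length * (m * cs (2*0+1)) =
            m * (-((-1)^A.length * cs (2*0+1))) from by ring]
        refine ⟨rhoPerm * cPerm r (m * (-((-1)^A.length * cs (2*0+1)))) * rhoPerm,
          mul_mem (mul_mem (rhoPerm_mem r m) (cPerm_pow_mem r m _)) (rhoPerm_mem r m), ?_⟩
        rw [show Dm * Cm (r.den : ℤ) r.num (m * (-((-1)^A.length * cs (2*0+1)))) * Dm * Smat * Smat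
            = Dm * Cm (r.den : ℤ) r.num (m * (-((-1)^A.length * cs (2*0+1)))) * Dm from by
          rw [Matrix.mul_assoc _ Smat Smat, Smat_sq, Matrix.mul_one]]
        refine Rep.mul (Rep.mul Rep_rho (Rep_c r _) ?_ ?_) Rep_rho ?_ ?_
        · rw [det_Dm]; norm_num
        · rw [det_Cm]; norm_num
        · rw [Matrix.det_mul, det_Dm, det_Cm]; norm_num
        · rw [det_Dm]; norm_num
    · -- inductive step, t ≥ 1
      obtain ⟨g, hgΓ, hrep⟩ := ih eps cs htpos (fun i hi => heps i (by omega))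
      have hmat : cfMat (hekSeq A m (t+1) eps cs) * Smat
          = (cfMat (hekSeq A m t eps cs) * Smat) * (Tmm (2 * cs (2*t)) *
              (cfMat ((A.map fun x => eps t * x) ++
                ([m * cs (2*t+1)] ++ A.reverse.map fun x => -eps t * x)) * Smat)) := by
        rw [hekSeq_succ, if_neg (by omega), cfMat_append, cfMat_append, cfMat_single]
        simp only [Matrix.mul_assoc]
        rw [Smat_mul_T]
      rw [hmat]
      have hdetB : (cfMat ((A.map fun x => eps t * x) ++
          ([m * cs (2*t+1)] ++ A.reverse.map fun x => -eps t * x)) * Smat).det ≠ 0 :=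
        det_cfS _
      rcases heps t (by omega) with he | he
      · rw [he] at hblock
        have hBS : cfMat ((A.map fun x => (1:ℤ) * x) ++
            ([m * cs (2*t+1)] ++ A.reverse.map fun x => -(1:ℤ) * x)) * Smat =
            Cm (r.den : ℤ) r.num (m * ((-1)^A.length * cs (2*t+1))) := by
          rw [hblock, if_pos rfl]
          rw [show (1 : ℤ) * (-1)^A.length * (m * cs (2*t+1)) =
              m * ((-1)^A.length * cs (2*t+1)) from by ring]
          rw [Matrix.one_mul, Matrix.mul_one, Matrix.mul_assoc, Smat_sq, Matrix.mul_one]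
        rw [he, hBS]
        refine ⟨g * (tPerm (2 * cs (2*t)) * cPerm r (m * ((-1)^A.length * cs (2*t+1)))),
          mul_mem hgΓ (mul_mem (tPerm_even_mem r m _) (cPerm_pow_mem r m _)), ?_⟩
        refine Rep.mul hrep (Rep.mul (Rep_t _) (Rep_c r _) ?_ ?_) (det_cfS _) ?_
        · rw [det_Tmm]; norm_num
        · rw [det_Cm]; norm_num
        · rw [Matrix.det_mul, det_Tmm, det_Cm]; norm_num
      · rw [he] at hblock
        have hBS : cfMat ((A.map fun x => (-1:ℤ) * x) ++
            ([m * cs (2*t+1)] ++ A.reverse.map fun x => -(-1:ℤ) * x)) * Smat =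
            Dm * Cm (r.den : ℤ) r.num (m * (-((-1)^A.length * cs (2*t+1)))) * Dm := by
          rw [hblock, if_neg (by norm_num)]
          rw [show (-1 : ℤ) * (-1)^A.length * (m * cs (2*t+1)) =
              m * (-((-1)^A.length * cs (2*t+1))) from by ring]
          rw [Matrix.mul_assoc _ Smat Smat, Smat_sq, Matrix.mul_one]
        rw [he, hBS]
        refine ⟨g * (tPerm (2 * cs (2*t)) *
            (rhoPerm * cPerm r (m * (-((-1)^A.length * cs (2*t+1)))) * rhoPerm)),
          mul_mem hgΓ (mul_mem (tPerm_even_mem r m _)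
            (mul_mem (mul_mem (rhoPerm_mem r m) (cPerm_pow_mem r m _)) (rhoPerm_mem r m))), ?_⟩
        refine Rep.mul hrep (Rep.mul (Rep_t _)
          (Rep.mul (Rep.mul Rep_rho (Rep_c r _) ?_ ?_) Rep_rho ?_ ?_) ?_ ?_) (det_cfS _) ?_
        · rw [det_Dm]; norm_num
        · rw [det_Cm]; norm_num
        · rw [Matrix.det_mul, det_Dm, det_Cm]; norm_num
        · rw [det_Dm]; norm_num
        · rw [det_Tmm]; norm_num
        · exact det_DCD _ _ _
        · rw [Matrix.det_mul, det_Tmm]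
          have := det_DCD (r.den : ℤ) r.num (m * (-((-1)^A.length * cs (2*t+1))))
          simpa using this
/-! ### The Good predicate and its invariance -/

def GoodP (A : List ℤ) (m : ℤ) (x : Option ℚ) : Prop :=
  ∀ s : ℚ, x = some s → ∃ t : ℕ, 0 < t ∧ ∃ (c : ℤ) (eps cs : ℕ → ℤ),
    (∀ i < t, eps i = 1 ∨ eps i = -1) ∧
    cfValue (hekSeq A m t eps cs) = some (s - 2 * c)

theorem GoodP_none (A : List ℤ) (m : ℤ) : GoodP A m none := by
  intro s hs; exact absurd hs (by simp)

theorem rhoPerm_none : rhoPerm none = none := by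
  rw [rhoPerm_apply, mfun_none, if_pos rfl]

theorem rhoPerm_some (v : ℚ) : rhoPerm (some v) = some (-v) := by
  rw [rhoPerm_apply, mfun_some]
  norm_num

theorem rhoPerm'_none : rhoPerm' none = none := by
  rw [rhoPerm'_apply, mfun_none, if_pos rfl]

theorem rhoPerm'_some (v : ℚ) : rhoPerm' (some v) = some (2 - v) := by
  rw [rhoPerm'_apply, mfun_some]
  norm_num
  ring

theorem GoodP_rho (A : List ℤ) (m : ℤ) (x : Option ℚ) (hx : GoodP A m x) :
    GoodP A m (rhoPerm x) := by
  cases x with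
  | none => rw [rhoPerm_none]; exact GoodP_none A m
  | some v =>
    rw [rhoPerm_some]
    intro s hs
    injection hs with hs'
    subst hs'
    obtain ⟨t, ht, c, eps, cs, heps, hval⟩ := hx v rfl
    refine ⟨t, ht, -c, (fun i => -(eps i)), (fun j => -(cs j)), ?_, ?_⟩
    · intro i hi; rcases heps i hi with h | h <;> simp [h]
    · rw [hekSeq_neg, cfValue_neg, hval]
      simp only [Option.map_some]
      congr 1
      push_cast
      ring

theorem GoodP_rho' (A : List ℤ) (m : ℤ) (x : Option ℚ) (hx : GoodP A m x) :
    GoodP A m (rhoPerm' x) := by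
  cases x with
  | none => rw [rhoPerm'_none]; exact GoodP_none A m
  | some v =>
    rw [rhoPerm'_some]
    intro s hs
    injection hs with hs'
    subst hs'
    obtain ⟨t, ht, c, eps, cs, heps, hval⟩ := hx v rfl
    refine ⟨t, ht, 1 - c, (fun i => -(eps i)), (fun j => -(cs j)), ?_, ?_⟩
    · intro i hi; rcases heps i hi with h | h <;> simp [h]
    · rw [hekSeq_neg, cfValue_neg, hval]
      simp only [Option.map_some]
      congr 1
      push_cast
      ring
theorem blockKey1 (p q σ w : ℤ) (A : List ℤ) (hσ : σ = 1 ∨ σ = -1)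
    (hb : cfMat A 0 1 = σ * q) (hd : cfMat A 1 1 = σ * p) :
    cfMat (A ++ ([w] ++ A.reverse.map (fun x => -x)))
      = Cm p q ((-1)^A.length * w) * Smat := by
  have h := blockKey p q σ 1 w A hσ (Or.inl rfl) hb hd
  rw [if_pos rfl, Matrix.one_mul, Matrix.mul_one] at h
  rw [show (A.map fun x => (1:ℤ) * x) = A from by simp] at h
  rw [show (A.reverse.map fun x => -(1:ℤ) * x) = A.reverse.map (fun x => -x) from by simp] at h
  rw [show ((1:ℤ)) * (-1)^A.length * w = (-1)^A.length * w from by ring] at h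
  exact h

theorem hekSeq_prepend (A : List ℤ) (m : ℤ) (eps cs : ℕ → ℤ) (w1 c : ℤ) :
    ∀ t, 0 < t →
    hekSeq A m (t+1)
      (fun i => if i = 0 then 1 else eps (i-1))
      (fun j => if j = 1 then w1 else if j = 2 then c else cs (j-2)) =
    (A ++ ([m * w1] ++ (A.reverse.map fun x => -x))) ++
      ([2 * c] ++ hekSeq A m t eps cs) := by
  intro t
  induction t with
  | zero => omega
  | succ t ih =>
    intro _
    rcases Nat.eq_zero_or_pos t with rfl | htpos
    · rw [hekSeq_succ, hekSeq_succ, hekSeq_zero, hekSeq_succ, hekSeq_zero]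
      norm_num
    · rw [hekSeq_succ, ih htpos, hekSeq_succ A m t eps cs, if_neg (by omega)]
      have e1 : (if t + 1 = 0 then (1:ℤ) else eps (t+1-1)) = eps t := by
        rw [if_neg (by omega), Nat.add_sub_cancel]
      have e2 : (if 2*(t+1) = 1 then w1 else if 2*(t+1) = 2 then c else cs (2*(t+1)-2))
          = cs (2*t) := by
        rw [if_neg (by omega), if_neg (by omega), show 2*(t+1)-2 = 2*t from by omega]
      have e3 : (if 2*(t+1)+1 = 1 then w1 else if 2*(t+1)+1 = 2 then c else cs (2*(t+1)+1-2))
          = cs (2*t+1) := by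
        rw [if_neg (by omega), if_neg (by omega), show 2*(t+1)+1-2 = 2*t+1 from by omega]
      simp only [e1, e2, e3, if_neg (Nat.succ_ne_zero t)]
      rw [if_neg (by omega : ¬ t = 0)]
      simp [List.append_assoc]
theorem Smat_mul_P (b : ℤ) : Smat * !![0,1;1,b] = Tmm b := by
  ext i j; fin_cases i <;> fin_cases j <;>
    simp [Smat, Tmm, Matrix.mul_apply, Fin.sum_univ_two]

theorem det_P (b : ℤ) : (!![0,1;1,b] : Matrix (Fin 2) (Fin 2) ℤ).det = -1 := by
  rw [Matrix.det_fin_two_of]; ring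

theorem tPerm_some (k : ℤ) (y : ℚ) : tPerm k (some y) = some (y + (k:ℚ)) := by
  rw [tPerm_apply, mfun_some]
  norm_num

theorem mOf_Smat_some0 : mOf Smat (some 0) = none := by
  rw [mOf, show (Smat 0 0) = 0 from rfl, show Smat 0 1 = 1 from rfl,
    show Smat 1 0 = 1 from rfl, show Smat 1 1 = 0 from rfl]
  norm_num [mfun_some]

theorem GoodP_c (r : ℚ) (m : ℤ) (A : List ℤ) (σ : ℤ) (hσ : σ = 1 ∨ σ = -1)
    (hb : cfMat A 0 1 = σ * r.num) (hd : cfMat A 1 1 = σ * (r.den : ℤ))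
    (k : ℤ) (x : Option ℚ) (hx : GoodP A m x) : GoodP A m (cPerm r (m*k) x) := by
  have hδδ : ((-1:ℤ))^A.length * (-1)^A.length = 1 := by rw [← mul_pow]; norm_num
  have hBK := blockKey1 (r.den : ℤ) r.num σ (m * ((-1)^A.length * k)) A hσ hb hd
  rw [show ((-1:ℤ))^A.length * (m * ((-1)^A.length * k)) = m * k from by
    linear_combination m * k * hδδ] at hBK
  cases x with
  | none =>
    intro s hs
    refine ⟨1, one_pos, 0, (fun _ => 1), (fun _ => (-1)^A.length * k), fun i _ => Or.inl rfl, ?_⟩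
    have h1 : hekSeq A m 1 (fun _ => (1:ℤ)) (fun _ => (-1)^A.length * k) =
        A ++ ([m * ((-1)^A.length * k)] ++ A.reverse.map (fun x => -x)) := by
      rw [hekSeq_succ, hekSeq_zero, if_pos rfl]
      simp
    rw [h1, cfValue_eq_mOf, hBK,
      mOf_mul _ _ (by rw [det_Cm]; norm_num) (by rw [det_Smat]; norm_num),
      mOf_Smat_some0, mOf_Cm, hs]
    norm_num
  | some v =>
    intro s hs
    obtain ⟨t, ht, c, eps, cs, heps, hval⟩ := hx v rfl
    refine ⟨t+1, by omega, 0, (fun i => if i = 0 then 1 else eps (i-1)),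
      (fun j => if j = 1 then (-1)^A.length * k else if j = 2 then c else cs (j-2)), ?_, ?_⟩
    · intro i hi
      rcases Nat.eq_zero_or_pos i with rfl | hipos
      · left; rfl
      · have := heps (i-1) (by omega)
        rcases this with h | h
        · left; simp only []; rw [if_neg (by omega)]; exact h
        · right; simp only []; rw [if_neg (by omega)]; exact h
    · rw [hekSeq_prepend A m eps cs _ c t ht]
      have hv' : mOf (cfMat (hekSeq A m t eps cs)) (some 0) = some (v - 2*c) := by
        rw [← cfValue_eq_mOf]; exact hval
      rw [cfValue_eq_mOf, cfMat_append, hBK, cfMat_append, cfMat_single]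
      rw [mOf_mul _ _ (by rw [Matrix.det_mul, det_Cm, det_Smat]; norm_num)
        (by rw [Matrix.det_mul, det_P]; simpa using det_cfMat_ne_zero (hekSeq A m t eps cs))]
      rw [mOf_mul _ _ (by rw [det_Cm]; norm_num) (by rw [det_Smat]; norm_num)]
      rw [mOf_mul _ _ (by rw [det_P]; norm_num) (det_cfMat_ne_zero _)]
      rw [hv']
      rw [← mOf_mul Smat _ (by rw [det_Smat]; norm_num) (by rw [det_P]; norm_num), Smat_mul_P]
      rw [mOf_Tmm, tPerm_some, show v - 2*(c:ℚ) + ((2*c : ℤ) : ℚ) = v from by push_cast; ring]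
      rw [mOf_Cm, hs]
      norm_num
theorem mOf_Smat_none : mOf Smat none = some 0 := by
  rw [mOf, show Smat 0 0 = 0 from rfl, show Smat 0 1 = 1 from rfl,
    show Smat 1 0 = 1 from rfl, show Smat 1 1 = 0 from rfl]
  norm_num [mfun_none]

/-- For `r = [a₁, …, a_k] ∈ (0,1)` (all `aᵢ > 0`, `a_k ≥ 2`) and an integer
`m = 2n ≥ 3`, a rational number `s` lies in the `Γ_{r,n}`-orbit of `∞` iff
`s = 2c + [ε₁·a, m·c₁, −ε₁·a⁻¹, 2c₂, …, ε_t·a, m·c_{2t−1}, −ε_t·a⁻¹]` for some data as displayed. -/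
theorem orbit_infty_iff_continued_fraction (r : ℚ) (hr0 : 0 < r) (hr1 : r < 1)
    (m : ℤ) (hm : 3 ≤ m) (A : List ℤ) (hA : A ≠ [])
    (hpos : ∀ x ∈ A, 0 < x) (hlast : 2 ≤ A.getLast hA)
    (hcf : cfValue A = some r) (s : ℚ) :
    orbitRel r m none (some s) ↔
      ∃ t : ℕ, 0 < t ∧ ∃ (c : ℤ) (eps cs : ℕ → ℤ),
        (∀ i < t, eps i = 1 ∨ eps i = -1) ∧
        cfValue (hekSeq A m t eps cs) = some (s - 2 * c) := by
  obtain ⟨σ, hσ, hb, hd⟩ := cfMat_entries r hr0 A hcf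
  constructor
  · rintro ⟨g, hg, hgx⟩
    have key : ∀ g ∈ Gamma r m, (∀ x, GoodP A m x → GoodP A m (g x)) ∧
        (∀ x, GoodP A m x → GoodP A m (g⁻¹ x)) := by
      intro g hg
      induction hg using Subgroup.closure_induction with
      | mem y hy =>
        simp only [Set.mem_insert_iff, Set.mem_singleton_iff] at hy
        rcases hy with rfl | rfl | rfl
        · exact ⟨fun x hx => GoodP_rho A m x hx,
            fun x hx => by rw [rhoPerm_inv]; exact GoodP_rho A m x hx⟩
        · exact ⟨fun x hx => GoodP_rho' A m x hx,
            fun x hx => by rw [rhoPerm'_inv]; exact GoodP_rho' A m x hx⟩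
        · constructor
          · intro x hx
            rw [show cPerm r m = cPerm r (m * 1) from by rw [mul_one]]
            exact GoodP_c r m A σ hσ hb hd 1 x hx
          · intro x hx
            rw [cPerm_inv, show (-m) = m * (-1) from by ring]
            exact GoodP_c r m A σ hσ hb hd (-1) x hx
      | one => exact ⟨fun x hx => by simpa using hx, fun x hx => by simpa using hx⟩
      | mul a b ha hb pa pb =>
        refine ⟨fun x hx => ?_, fun x hx => ?_⟩
        · rw [Equiv.Perm.mul_apply]; exact pa.1 _ (pb.1 x hx)
        · rw [mul_inv_rev, Equiv.Perm.mul_apply]; exact pb.2 _ (pa.2 x hx)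
      | inv a ha pa =>
        exact ⟨pa.2, fun x hx => by rw [inv_inv]; exact pa.1 x hx⟩
    have hGood := (key g hg).1 none (GoodP_none A m)
    rw [hgx] at hGood
    exact hGood s rfl
  · rintro ⟨t, ht, c, eps, cs, heps, hval⟩
    obtain ⟨g, hgΓ, hrep⟩ := forward_rep r m A σ hσ hb hd t eps cs ht heps
    refine ⟨tPerm (2*c) * g, mul_mem (tPerm_even_mem r m c) hgΓ, ?_⟩
    rw [Equiv.Perm.mul_apply, hrep none,
      mOf_mul _ _ (det_cfMat_ne_zero _) (by rw [det_Smat]; norm_num),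
      mOf_Smat_none, ← cfValue_eq_mOf, hval, tPerm_some]
    congr 1
    push_cast
    ring

end Heckoid
end

section
/- Let r = q/p ∈ (0,1) be a rational number in lowest terms and n ≥ 2 an integer. The image of the word u_r in the even Heckoid group H(r;n) = ⟨a, b | u_r^n⟩ has order exactly n; in particular it is a nontrivial torsion element. -/
namespace Heckoid

/-! ### Auxiliary: a dihedral representation detecting the order of `u_r` -/

/-- Send both generators to reflections in a dihedral group. -/
def dihF (N : ℕ) : Fin 2 → DihedralGroup N :=
  fun i => DihedralGroup.sr (if i = 0 then 0 else 1)

lemma r_inv {N : ℕ} (j : ZMod N) : (DihedralGroup.r j)⁻¹ = DihedralGroup.r (-j) := rfl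

lemma sr_inv {N : ℕ} (j : ZMod N) : (DihedralGroup.sr j)⁻¹ = DihedralGroup.sr j := rfl

lemma sr_zpow_pm {N : ℕ} (j : ZMod N) {z : ℤ} (hz : z = 1 ∨ z = -1) :
    (DihedralGroup.sr j) ^ z = DihedralGroup.sr j := by
  rcases hz with h | h <;> subst h
  · exact zpow_one _
  · rw [zpow_neg, zpow_one, sr_inv]

lemma neg_one_pow_pm (k : ℕ) : ((-1 : ℤ) ^ k = 1) ∨ ((-1 : ℤ) ^ k = -1) := by
  rcases Nat.even_or_odd k with h | h
  · exact Or.inl h.neg_one_pow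
  · exact Or.inr h.neg_one_pow

lemma epsSign_pm (q : ℤ) (p i : ℕ) : epsSign q p i = 1 ∨ epsSign q p i = -1 :=
  neg_one_pow_pm _

lemma prodS {N : ℕ} (m : ℕ) :
    ((List.range m).map fun i =>
        (DihedralGroup.sr (if i % 2 = 0 then 1 else 0) : DihedralGroup N)).prod =
      if m % 2 = 0 then DihedralGroup.r (-((m / 2 : ℕ) : ZMod N))
      else DihedralGroup.sr (((m / 2 + 1 : ℕ) : ZMod N)) := by
  induction m with
  | zero => simp [-DihedralGroup.r_zero, DihedralGroup.one_def]
  | succ m ih =>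
    rw [List.range_succ, List.map_append, List.prod_append, ih]
    simp only [List.map_cons, List.map_nil, List.prod_cons, List.prod_nil, mul_one]
    rcases Nat.even_or_odd m with hm | hm
    · have h1 : m % 2 = 0 := Nat.even_iff.mp hm
      rw [if_pos h1, if_pos h1, if_neg (by omega), DihedralGroup.r_mul_sr]
      congr 1
      have h2 : (m + 1) / 2 = m / 2 := by omega
      rw [h2]
      push_cast
      ring
    · have h0 : m % 2 = 1 := Nat.odd_iff.mp hm
      have h1 : ¬ (m % 2 = 0) := by omega
      rw [if_neg h1, if_neg h1, if_pos (by omega), DihedralGroup.sr_mul_sr]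
      congr 1
      have h2 : (m + 1) / 2 = m / 2 + 1 := by omega
      rw [h2]
      push_cast
      ring

lemma lift_vWord {N : ℕ} (q : ℤ) (p : ℕ) :
    FreeGroup.lift (dihF N) (vWord q p) =
      if (p - 1) % 2 = 0 then DihedralGroup.r (-(((p - 1) / 2 : ℕ) : ZMod N))
      else DihedralGroup.sr ((((p - 1) / 2 + 1 : ℕ) : ZMod N)) := by
  unfold vWord
  rw [map_list_prod, List.map_map, ← prodS (p - 1)]
  refine congrArg List.prod (List.map_congr_left fun i _ => ?_)
  simp only [Function.comp_apply]
  rw [map_zpow]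
  have hgen : FreeGroup.lift (dihF N) (genAt (i + 1)) =
      DihedralGroup.sr (if i % 2 = 0 then 1 else 0) := by
    unfold genAt
    rcases Nat.even_or_odd i with hi | hi
    · have h0 : i % 2 = 0 := Nat.even_iff.mp hi
      rw [if_pos (by omega : (i + 1) % 2 = 1), if_pos h0]
      simp [gb, dihF]
    · have h0 : i % 2 = 1 := Nat.odd_iff.mp hi
      rw [if_neg (by omega : ¬ ((i + 1) % 2 = 1)), if_neg (by omega)]
      simp [ga, dihF]
  rw [hgen, sr_zpow_pm _ (epsSign_pm q p (i + 1))]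

lemma lift_uWord (s : ℚ) {N : ℕ} :
    FreeGroup.lift (dihF N) (uWord s) = DihedralGroup.r ((s.den : ZMod N)) := by
  have hp : 1 ≤ s.den := s.pos
  have hga : FreeGroup.lift (dihF N) ga = DihedralGroup.sr 0 := by simp [ga, dihF]
  have hgb : FreeGroup.lift (dihF N) gb = DihedralGroup.sr 1 := by simp [gb, dihF]
  unfold uWord
  rcases Nat.even_or_odd s.den with hd | hd
  · -- p even : u = a v a⁻¹ v⁻¹, v maps to sr (k+1), k = (p-1)/2
    have hde : s.den % 2 = 0 := Nat.even_iff.mp hd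
    rw [if_neg (by omega)]
    rw [map_mul, map_mul, map_mul, map_inv, map_inv, hga, lift_vWord,
      if_neg (by omega), sr_inv, sr_inv]
    rw [DihedralGroup.sr_mul_sr, DihedralGroup.r_mul_sr, DihedralGroup.sr_mul_sr]
    congr 1
    set k := (s.den - 1) / 2 with hk
    have h2 : k + 1 + (k + 1) = s.den := by omega
    rw [← h2]
    push_cast
    ring
  · -- p odd : u = a v b^{±1} v⁻¹, v maps to r (-k), k = (p-1)/2
    have hde : s.den % 2 = 1 := Nat.odd_iff.mp hd
    rw [if_pos hde]
    rw [map_mul, map_mul, map_mul, map_inv, map_zpow, hga, hgb, lift_vWord,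
      if_pos (by omega), sr_zpow_pm _ (neg_one_pow_pm _)]
    rw [r_inv, neg_neg, DihedralGroup.sr_mul_r, DihedralGroup.sr_mul_sr,
      DihedralGroup.r_mul_r]
    congr 1
    set k := (s.den - 1) / 2 with hk
    have h2 : 1 + (k + k) = s.den := by omega
    rw [← h2]
    push_cast
    ring

/-- The image of `u_r` in `H(r;n) = ⟨a,b ∣ u_r^n⟩` has order exactly `n`;
in particular it is a nontrivial torsion element. -/
theorem orderOf_uWord_eq (r : ℚ) (hr0 : 0 < r) (hr1 : r < 1) (n : ℕ) (hn : 2 ≤ n) :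
    orderOf (hMk r n (uWord r)) = n ∧ hMk r n (uWord r) ≠ 1 ∧
      IsOfFinOrder (hMk r n (uWord r)) := by
  have hp1 : 1 ≤ r.den := r.pos
  haveI : NeZero (n * r.den) := ⟨by positivity⟩
  have hu : FreeGroup.lift (dihF (n * r.den)) (uWord r)
      = DihedralGroup.r ((r.den : ZMod (n * r.den))) := lift_uWord r
  have hord : orderOf (DihedralGroup.r ((r.den : ZMod (n * r.den)))) = n := by
    rw [DihedralGroup.orderOf_r, ZMod.val_natCast_of_lt (by nlinarith)]
    rw [Nat.gcd_comm, Nat.gcd_eq_left (dvd_mul_left r.den n), Nat.mul_div_cancel _ (by omega)]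
  have hker : ∀ w ∈ ({uWord r ^ n} : Set FG), FreeGroup.lift (dihF (n * r.den)) w = 1 := by
    intro w hw
    rw [Set.mem_singleton_iff] at hw
    subst hw
    rw [map_pow, hu]
    have h := pow_orderOf_eq_one (DihedralGroup.r ((r.den : ZMod (n * r.den))))
    rwa [hord] at h
  have hrel : (hMk r n (uWord r)) ^ n = 1 := by
    rw [← map_pow]
    exact (QuotientGroup.eq_one_iff _).mpr
      (Subgroup.subset_normalClosure (Set.mem_singleton _))
  let ψ : HeckoidGroup r n →* DihedralGroup (n * r.den) := PresentedGroup.toGroup hker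
  have hψ : ψ (hMk r n (uWord r)) = DihedralGroup.r ((r.den : ZMod (n * r.den))) := by
    rw [show ψ (hMk r n (uWord r)) = FreeGroup.lift (dihF (n * r.den)) (uWord r) from rfl, hu]
  have hdvd1 : orderOf (hMk r n (uWord r)) ∣ n := orderOf_dvd_of_pow_eq_one hrel
  have hdvd2 : n ∣ orderOf (hMk r n (uWord r)) := by
    have h := orderOf_map_dvd ψ (hMk r n (uWord r))
    rw [hψ, hord] at h
    exact h
  have heq : orderOf (hMk r n (uWord r)) = n := Nat.dvd_antisymm hdvd1 hdvd2
  refine ⟨heq, ?_, ?_⟩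
  · intro h
    rw [h, orderOf_one] at heq
    omega
  · exact isOfFinOrder_iff_pow_eq_one.mpr ⟨n, by omega, hrel⟩

end Heckoid
end

section
/- Let r = q/p ∈ (0,1) be a rational number in lowest terms and let m = 2n ≥ 3 be an integer (n an integer or half-integer with n > 1). Then r does not belong to the Γ_{r,n}-orbit of ∞ in ℚ ∪ {∞}; that is, no element of the group Γ_{r,n} generated by ρ, ρ', and c maps ∞ to r. -/
namespace Heckoid

/-- Composition of Möbius functions corresponds to matrix multiplication. -/
theorem mfun_comp (A B C D A' B' C' D' : ℚ) (h : A * D - B * C ≠ 0)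
    (h' : A' * D' - B' * C' ≠ 0) (x : Option ℚ) :
    mfun A B C D (mfun A' B' C' D' x) =
      mfun (A * A' + B * C') (A * B' + B * D') (C * A' + D * C') (C * B' + D * D') x := by
  cases x with
  | none =>
    by_cases hC' : C' = 0
    · have hA' : A' ≠ 0 := by
        intro h0
        apply h'
        rw [h0, hC']
        ring
      subst hC'
      by_cases hC : C = 0
      · simp [mfun, hC]
      · have hCA : C * A' + D * 0 ≠ 0 := by
          simpa using mul_ne_zero hC hA'
        simp only [mfun, if_neg hC, if_neg hCA, if_true]
        congr 1
        field_simp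
        ring
    · have h1 : mfun A' B' C' D' none = some (A' / C') := by simp [mfun, hC']
      rw [h1]
      by_cases h0 : C * A' + D * C' = 0
      · have hcond : C * (A' / C') + D = 0 := by
          field_simp
          linear_combination h0
        simp only [mfun, if_pos hcond, if_pos h0]
      · have hcond : C * (A' / C') + D ≠ 0 := by
          intro hc
          apply h0
          field_simp at hc
          linear_combination hc
        simp only [mfun, if_neg hcond, if_neg h0]
        congr 1
        rw [div_eq_div_iff hcond h0]
        field_simp
  | some x =>
    by_cases hd : C' * x + D' = 0
    · have hnum : A' * x + B' ≠ 0 := by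
        intro h0
        apply h'
        have key : (A' * x + B') * C' - (C' * x + D') * A' = -(A' * D' - B' * C') := by ring
        rw [h0, hd] at key
        linarith
      have h1 : mfun A' B' C' D' (some x) = none := by simp [mfun, hd]
      rw [h1]
      by_cases hC : C = 0
      · have hcond : (C * A' + D * C') * x + (C * B' + D * D') = 0 := by
          rw [hC]
          linear_combination D * hd
        simp only [mfun, if_pos hC, if_pos hcond]
      · have hcond : (C * A' + D * C') * x + (C * B' + D * D') ≠ 0 := by
          have : (C * A' + D * C') * x + (C * B' + D * D') =
              C * (A' * x + B') + D * (C' * x + D') := by ring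
          rw [this, hd, mul_zero, add_zero]
          exact mul_ne_zero hC hnum
        simp only [mfun, if_neg hC, if_neg hcond]
        congr 1
        rw [div_eq_div_iff hC hcond]
        linear_combination (A * D - B * C) * hd
    · have h1 : mfun A' B' C' D' (some x) = some ((A' * x + B') / (C' * x + D')) := by
        simp [mfun, hd]
      rw [h1]
      have hden2 : C * ((A' * x + B') / (C' * x + D')) + D =
          ((C * A' + D * C') * x + (C * B' + D * D')) / (C' * x + D') := by
        rw [eq_div_iff hd, add_mul, mul_assoc, div_mul_cancel₀ _ hd]
        ring
      by_cases h0 : (C * A' + D * C') * x + (C * B' + D * D') = 0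
      · have hcond : C * ((A' * x + B') / (C' * x + D')) + D = 0 := by
          rw [hden2, h0, zero_div]
        simp only [mfun, if_pos hcond, if_pos h0]
      · have hcond : C * ((A' * x + B') / (C' * x + D')) + D ≠ 0 := by
          rw [hden2]
          exact div_ne_zero h0 hd
        simp only [mfun, if_neg hcond, if_neg h0]
        congr 1
        have hnum2 : A * ((A' * x + B') / (C' * x + D')) + B =
            ((A * A' + B * C') * x + (A * B' + B * D')) / (C' * x + D') := by
          rw [eq_div_iff hd, add_mul, mul_assoc, div_mul_cancel₀ _ hd]
          ring
        rw [hnum2, hden2, div_div_div_eq, mul_comm (C' * x + D') _,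
          mul_div_mul_right _ _ hd]

/-- Every element of `Γ_{r,n}` is the Möbius transformation of an integer matrix of
determinant `±1` whose lower-left entry is divisible by `m p²`. -/
theorem gamma_matrix (r : ℚ) (m : ℤ) {g : Equiv.Perm (Option ℚ)} (hg : g ∈ Gamma r m) :
    ∃ A B C D : ℤ, IsUnit (A * D - B * C) ∧ (m * (r.den : ℤ) ^ 2 ∣ C) ∧
      ∀ x, g x = mfun (A : ℚ) (B : ℚ) (C : ℚ) (D : ℚ) x := by
  refine Subgroup.closure_induction ?_ ?_ ?_ ?_ hg
  · rintro x (rfl | rfl | rfl)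
    · refine ⟨-1, 0, 0, 1, by norm_num, dvd_zero _, fun x => ?_⟩
      show mfun (-1) 0 0 1 x = _
      norm_num
    · refine ⟨-1, 2, 0, 1, by norm_num, dvd_zero _, fun x => ?_⟩
      show mfun (-1) 2 0 1 x = _
      norm_num
    · refine ⟨1 + m * (r.den : ℤ) * r.num, -(m * r.num ^ 2), m * (r.den : ℤ) ^ 2,
        1 - m * (r.den : ℤ) * r.num, ?_, dvd_refl _, fun x => ?_⟩
      · have : (1 + m * (r.den : ℤ) * r.num) * (1 - m * (r.den : ℤ) * r.num) -
            -(m * r.num ^ 2) * (m * (r.den : ℤ) ^ 2) = 1 := by ring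
        rw [this]
        exact isUnit_one
      · show mfun (1 + (m : ℚ) * r.den * r.num) (-((m : ℚ) * r.num ^ 2)) ((m : ℚ) * r.den ^ 2)
          (1 - (m : ℚ) * r.den * r.num) x = _
        push_cast
        rfl
  · refine ⟨1, 0, 0, 1, by norm_num, dvd_zero _, fun x => ?_⟩
    cases x with
    | none => simp [mfun]
    | some x => simp [mfun]
  · rintro g₁ g₂ - - ⟨A, B, C, D, hdet, hdvd, hfun⟩ ⟨A', B', C', D', hdet', hdvd', hfun'⟩
    refine ⟨A * A' + B * C', A * B' + B * D', C * A' + D * C', C * B' + D * D', ?_, ?_, fun x => ?_⟩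
    · have : (A * A' + B * C') * (C * B' + D * D') - (A * B' + B * D') * (C * A' + D * C') =
          (A * D - B * C) * (A' * D' - B' * C') := by ring
      rw [this]
      exact hdet.mul hdet'
    · exact dvd_add (hdvd.mul_right A') (Dvd.dvd.mul_left hdvd' D)
    · have hq : (A : ℚ) * D - B * C ≠ 0 := by
        have h0 : (A * D - B * C : ℤ) ≠ 0 := hdet.ne_zero
        exact_mod_cast fun hc => h0 (by exact_mod_cast hc)
      have hq' : (A' : ℚ) * D' - B' * C' ≠ 0 := by
        have h0 : (A' * D' - B' * C' : ℤ) ≠ 0 := hdet'.ne_zero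
        exact_mod_cast fun hc => h0 (by exact_mod_cast hc)
      have := mfun_comp (A : ℚ) B C D A' B' C' D' hq hq' x
      rw [Equiv.Perm.mul_apply, hfun' x, hfun _, this]
      push_cast
      rfl
  · rintro g - ⟨A, B, C, D, hdet, hdvd, hfun⟩
    refine ⟨D, -B, -C, A, ?_, dvd_neg.mpr hdvd, fun x => ?_⟩
    · have : D * A - -B * -C = A * D - B * C := by ring
      rw [this]
      exact hdet
    · have hq : (D : ℚ) * A - (-B) * (-C) ≠ 0 := by
        have h0 : (A * D - B * C : ℤ) ≠ 0 := hdet.ne_zero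
        have : ((A : ℚ) * D - B * C) ≠ 0 := by
          exact_mod_cast fun hc => h0 (by exact_mod_cast hc)
        intro hc
        apply this
        linear_combination hc
      have hright : mfun (A : ℚ) B C D (mfun (D : ℚ) (-(B : ℚ)) (-(C : ℚ)) (A : ℚ) x) = x := by
        have := mfun_leftInv (D : ℚ) (-(B : ℚ)) (-(C : ℚ)) (A : ℚ) hq x
        simpa using this
      have : g⁻¹ x = mfun (D : ℚ) (-(B : ℚ)) (-(C : ℚ)) (A : ℚ) x := by
        apply g.injective
        rw [show g (g⁻¹ x) = x from g.apply_symm_apply x, hfun _, hright]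
      rw [this]
      push_cast
      rfl

/-- For `r ∈ (0,1)` and an integer `m = 2n ≥ 3`, the slope `r` does not
belong to the `Γ_{r,n}`-orbit of `∞`: no element of `Γ_{r,n}` maps `∞` to `r`. -/
theorem r_not_in_orbit_of_infty (r : ℚ) (hr0 : 0 < r) (hr1 : r < 1)
    (m : ℤ) (hm : 3 ≤ m) :
    ¬ orbitRel r m none (some r) := by
  rintro ⟨g, hg, hgr⟩
  obtain ⟨A, B, C, D, hdet, hdvd, hfun⟩ := gamma_matrix r m hg
  have hInf := hfun none
  rw [hgr] at hInf
  by_cases hC : (C : ℚ) = 0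
  · simp [mfun, hC] at hInf
  · simp only [mfun, if_neg hC, Option.some.injEq] at hInf
    have hden : (r.den : ℚ) ≠ 0 := by
      exact_mod_cast r.den_nz
    have hQ : (A : ℚ) * r.den = r.num * C := by
      have hr' : (r.num : ℚ) / r.den = (A : ℚ) / C := by
        rw [Rat.num_div_den]
        exact hInf
      rw [div_eq_div_iff hden hC] at hr'
      exact hr'.symm
    have hZ : A * (r.den : ℤ) = r.num * C := by exact_mod_cast hQ
    have hCne : C ≠ 0 := fun h0 => hC (by rw [h0]; simp)
    have hco : IsCoprime C A := by
      rcases Int.isUnit_iff.mp hdet with h1 | h1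
      · exact ⟨-B, D, by linear_combination h1⟩
      · exact ⟨B, -D, by linear_combination -h1⟩
    have hCp : C ∣ (r.den : ℤ) := by
      refine hco.dvd_of_dvd_mul_left ?_
      refine ⟨r.num, ?_⟩
      linear_combination hZ
    have hmp : m * (r.den : ℤ) ^ 2 ∣ (r.den : ℤ) := hdvd.trans hCp
    have hd1 : (1 : ℤ) ≤ (r.den : ℤ) := by exact_mod_cast r.pos
    have hle := Int.le_of_dvd (by linarith) hmp
    nlinarith

end Heckoid
end
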